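/- Let a > 1. The sequence of functions F_n : ℝ^d → ℂ defined by F_n(x) = Σ_{k=0}^{n} C_k(n,a) · exp(i·(p·x)·(1 − 2k/n)/ħ) converges pointwise on ℝ^d to F(x) = exp(i·a·(p·x)/ħ) as n → ∞, and the convergence is uniform on every compact subset of ℝ^d. -/

import Mathlib

open scoped RealInnerProductSpace

section superosc_helpers
open Complex Finset



lemma norm_pow_sub_pow_le' (x y : ℂ) (B : ℝ) (hx : ‖x‖ ≤ B) (hy : ‖y‖ ≤ B) (n : ℕ) :
    ‖x ^ n - y ^ n‖ ≤ n * B ^ (n - 1) * ‖x - y‖ := by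
  have hB : 0 ≤ B := le_trans (norm_nonneg _) hx
  rw [← geom_sum₂_mul, norm_mul]
  gcongr
  calc ‖∑ i ∈ range n, x ^ i * y ^ (n - 1 - i)‖
      ≤ ∑ i ∈ range n, ‖x ^ i * y ^ (n - 1 - i)‖ := by
        exact norm_sum_le _ _
    _ ≤ ∑ i ∈ range n, B ^ (n - 1) := by
        apply Finset.sum_le_sum
        intro i hi
        rw [norm_mul, norm_pow, norm_pow]
        calc ‖x‖ ^ i * ‖y‖ ^ (n - 1 - i) ≤ B ^ i * B ^ (n - 1 - i) := by
              gcongr <;> exact norm_nonneg _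
          _ = B ^ (n - 1) := by
              rw [← pow_add]
              congr 1
              have := Finset.mem_range.mp hi
              omega
    _ ≤ n * B ^ (n - 1) := by
        rw [Finset.sum_const, card_range, nsmul_eq_mul]


lemma center_bound (a θ : ℝ) (ha : 1 ≤ a) (hθ : |θ| ≤ 1) (haθ : |a * θ| ≤ 1) :
    ‖(1 - (a:ℂ)) / 2 * exp (-(I * θ)) + (1 + (a:ℂ)) / 2 * exp (I * θ) - exp (I * a * θ)‖
      ≤ (a ^ 2 + 2 * a) * θ ^ 2 := by
  have key : (1 - (a:ℂ)) / 2 * exp (-(I * θ)) + (1 + (a:ℂ)) / 2 * exp (I * θ) - exp (I * a * θ)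
      = (1 - (a:ℂ)) / 2 * (exp (-(I * θ)) - 1 - (-(I * θ)))
        + (1 + (a:ℂ)) / 2 * (exp (I * θ) - 1 - I * θ)
        - (exp (I * a * θ) - 1 - I * a * θ) := by ring
  rw [key]
  have habs1 : ‖I * (θ:ℂ)‖ = |θ| := by
    rw [norm_mul, Complex.norm_I, one_mul, Complex.norm_real, Real.norm_eq_abs]
  have habs2 : ‖-(I * (θ:ℂ))‖ = |θ| := by rw [norm_neg]; exact habs1
  have habs3 : ‖I * (a:ℂ) * (θ:ℂ)‖ = |a * θ| := by
    rw [mul_assoc, norm_mul, Complex.norm_I, one_mul, ← ofReal_mul, Complex.norm_real, Real.norm_eq_abs]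
  have h1 : ‖exp (-(I * θ)) - 1 - (-(I * θ))‖ ≤ θ ^ 2 := by
    have := Complex.norm_exp_sub_one_sub_id_le (x := -(I * θ)) (by rw [habs2]; exact hθ)
    rwa [habs2, _root_.sq_abs] at this
  have h2 : ‖exp (I * θ) - 1 - I * θ‖ ≤ θ ^ 2 := by
    have := Complex.norm_exp_sub_one_sub_id_le (x := I * θ) (by rw [habs1]; exact hθ)
    rwa [habs1, _root_.sq_abs] at this
  have h3 : ‖exp (I * a * θ) - 1 - I * a * θ‖ ≤ a ^ 2 * θ ^ 2 := by
    have := Complex.norm_exp_sub_one_sub_id_le (x := I * a * θ) (by rw [habs3]; exact haθ)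
    rw [habs3] at this
    calc _ ≤ |a * θ| ^ 2 := this
      _ = a ^ 2 * θ ^ 2 := by rw [_root_.abs_mul, mul_pow, _root_.sq_abs, _root_.sq_abs]
  have hc1 : ‖(1 - (a:ℂ)) / 2‖ ≤ a := by
    rw [show (1 - (a:ℂ)) / 2 = (((1 - a) / 2 : ℝ) : ℂ) by push_cast; ring, Complex.norm_real, Real.norm_eq_abs]
    rw [_root_.abs_div, abs_of_nonpos (by linarith), abs_of_pos (by norm_num : (0:ℝ) < 2)]
    linarith
  have hc2 : ‖(1 + (a:ℂ)) / 2‖ ≤ a := by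
    rw [show (1 + (a:ℂ)) / 2 = (((1 + a) / 2 : ℝ) : ℂ) by push_cast; ring, Complex.norm_real, Real.norm_eq_abs]
    rw [_root_.abs_div, abs_of_pos (by linarith), abs_of_pos (by norm_num : (0:ℝ) < 2)]
    linarith
  calc ‖_‖ ≤ ‖(1 - (a:ℂ)) / 2 * (exp (-(I * θ)) - 1 - (-(I * θ)))
        + (1 + (a:ℂ)) / 2 * (exp (I * θ) - 1 - I * θ)‖
        + ‖exp (I * a * θ) - 1 - I * a * θ‖ := norm_sub_le _ _
    _ ≤ (‖(1 - (a:ℂ)) / 2 * (exp (-(I * θ)) - 1 - (-(I * θ)))‖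
        + ‖(1 + (a:ℂ)) / 2 * (exp (I * θ) - 1 - I * θ)‖)
        + ‖exp (I * a * θ) - 1 - I * a * θ‖ := by
          gcongr; exact norm_add_le _ _
    _ ≤ (a * θ ^ 2 + a * θ ^ 2) + a ^ 2 * θ ^ 2 := by
        gcongr
        · rw [norm_mul]
          exact mul_le_mul hc1 h1 (norm_nonneg _) (by linarith)
        · rw [norm_mul]
          exact mul_le_mul hc2 h2 (norm_nonneg _) (by linarith)
    _ = (a ^ 2 + 2 * a) * θ ^ 2 := by ring


lemma sum_eq_pow (a : ℝ) (u : ℂ) (n : ℕ) (hn : 1 ≤ n) :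
    ∑ k ∈ Finset.range (n + 1),
        ((n.choose k : ℂ) * (((1 + a) / 2 : ℝ) : ℂ) ^ (n - k) * (((1 - a) / 2 : ℝ) : ℂ) ^ k)
          * Complex.exp (u * (1 - 2 * (k : ℂ) / (n : ℂ)))
      = ((((1 - a) / 2 : ℝ) : ℂ) * exp (-(u / n)) + (((1 + a) / 2 : ℝ) : ℂ) * exp (u / n)) ^ n := by
  have hn0 : (n : ℂ) ≠ 0 := Nat.cast_ne_zero.mpr (by omega)
  rw [add_pow]
  apply Finset.sum_congr rfl
  intro k hk
  have hk' : k ≤ n := Nat.lt_succ_iff.mp (Finset.mem_range.mp hk)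
  have hexp : Complex.exp (u * (1 - 2 * (k : ℂ) / (n : ℂ)))
      = exp (u / n) ^ (n - k) * exp (-(u / n)) ^ k := by
    rw [← Complex.exp_nat_mul, ← Complex.exp_nat_mul, ← Complex.exp_add]
    congr 1
    have : ((n - k : ℕ) : ℂ) = (n : ℂ) - (k : ℂ) := by
      push_cast [Nat.cast_sub hk']; ring
    rw [this]
    field_simp
    ring
  rw [hexp]
  ring

set_option maxHeartbeats 1000000 in
lemma key_bound (a M : ℝ) (ha : 1 < a) (hM : 0 ≤ M) (n : ℕ) (hn1 : 1 ≤ n)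
    (hn2 : a * M ≤ n) (t : ℝ) (ht : |t| ≤ M) :
    ‖((((1 - a) / 2 : ℝ) : ℂ) * exp (-(I * t / n)) + (((1 + a) / 2 : ℝ) : ℂ) * exp (I * t / n)) ^ n
        - exp (I * a * t)‖
      ≤ Real.exp ((a ^ 2 + 2 * a) * M ^ 2) * ((a ^ 2 + 2 * a) * M ^ 2) / n := by
  have hn0 : (0 : ℝ) < n := by exact_mod_cast hn1
  have hn0' : (n : ℝ) ≠ 0 := ne_of_gt hn0
  set θ : ℝ := t / n with hθdef
  set K : ℝ := a ^ 2 + 2 * a with hKdef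
  have hK : 0 < K := by nlinarith
  have hMn : M ≤ n := le_trans (by nlinarith) hn2
  have hθ1 : |θ| ≤ 1 := by
    rw [hθdef, abs_div, abs_of_pos hn0]
    rw [div_le_one hn0]
    exact le_trans ht hMn
  have haθ1 : |a * θ| ≤ 1 := by
    rw [hθdef, show a * (t / n) = a * t / n by ring, abs_div, abs_of_pos hn0, div_le_one hn0,
      abs_mul, abs_of_pos (by linarith : (0:ℝ) < a)]
    calc a * |t| ≤ a * M := by nlinarith
      _ ≤ n := hn2
  have ht2 : t ^ 2 ≤ M ^ 2 := by nlinarith [abs_nonneg t, _root_.sq_abs t, neg_abs_le t, le_abs_self t]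
  set z : ℂ := (1 - (a:ℂ)) / 2 * exp (-(I * θ)) + (1 + (a:ℂ)) / 2 * exp (I * θ) with hzdef
  set w : ℂ := exp (I * a * θ) with hwdef
  have hd : ‖z - w‖ ≤ K * θ ^ 2 := center_bound a θ (le_of_lt ha) hθ1 haθ1
  have hw : ‖w‖ = 1 := by
    rw [hwdef, show I * (a:ℂ) * (θ:ℂ) = ((a * θ : ℝ) : ℂ) * I by push_cast; ring]
    exact Complex.norm_exp_ofReal_mul_I _
  have hz : ‖z‖ ≤ 1 + K * θ ^ 2 := by
    calc ‖z‖ = ‖z - w + w‖ := by ring_nf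
      _ ≤ ‖z - w‖ + ‖w‖ := norm_add_le _ _
      _ ≤ K * θ ^ 2 + 1 := by rw [hw]; gcongr
      _ = 1 + K * θ ^ 2 := by ring
  -- rewrite goal in terms of z, w
  have hzform : (((1 - a) / 2 : ℝ) : ℂ) * exp (-(I * t / n)) + (((1 + a) / 2 : ℝ) : ℂ) * exp (I * t / n) = z := by
    rw [hzdef]
    have h1 : I * (t:ℂ) / (n:ℂ) = I * ((θ:ℝ):ℂ) := by
      rw [hθdef]; push_cast; ring
    rw [← h1]
    push_cast
    ring
  have hwpow : w ^ n = exp (I * a * t) := by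
    rw [hwdef, ← Complex.exp_nat_mul]
    congr 1
    have hcn : (n : ℂ) ≠ 0 := Nat.cast_ne_zero.mpr (by omega)
    rw [hθdef]
    push_cast
    rw [show (n:ℂ) * (I * (a:ℂ) * ((t:ℂ) / (n:ℂ))) = I * (a:ℂ) * (t:ℂ) * ((n:ℂ) / (n:ℂ)) by ring,
      div_self hcn, mul_one]
  rw [hzform, ← hwpow]
  have hB1 : (1:ℝ) ≤ 1 + K * θ ^ 2 := by nlinarith [sq_nonneg θ]
  calc ‖z ^ n - w ^ n‖
      ≤ n * (1 + K * θ ^ 2) ^ (n - 1) * ‖z - w‖ :=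
        norm_pow_sub_pow_le' z w _ hz (by rw [hw]; exact hB1) n
    _ ≤ n * (1 + K * θ ^ 2) ^ (n - 1) * (K * θ ^ 2) := by
        have hKθ : (0:ℝ) ≤ 1 + K * θ ^ 2 := by nlinarith [sq_nonneg θ]
        exact mul_le_mul_of_nonneg_left hd
          (mul_nonneg (Nat.cast_nonneg n) (pow_nonneg hKθ _))
    _ ≤ n * (1 + K * θ ^ 2) ^ n * (K * θ ^ 2) := by
        refine mul_le_mul_of_nonneg_right
          (mul_le_mul_of_nonneg_left (pow_le_pow_right₀ hB1 (Nat.sub_le n 1))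
            (Nat.cast_nonneg n)) (by nlinarith [sq_nonneg θ])
    _ ≤ n * Real.exp (K * M ^ 2) * (K * θ ^ 2) := by
        gcongr
        calc (1 + K * θ ^ 2) ^ n ≤ Real.exp (K * θ ^ 2) ^ n := by
              apply pow_le_pow_left₀ (by nlinarith [sq_nonneg θ])
              linarith [Real.add_one_le_exp (K * θ ^ 2)]
          _ = Real.exp (n * (K * θ ^ 2)) := by rw [← Real.exp_nat_mul]
          _ ≤ Real.exp (K * M ^ 2) := by
              apply Real.exp_le_exp.mpr
              rw [hθdef, div_pow]
              rw [show (n:ℝ) * (K * (t ^ 2 / n ^ 2)) = K * (t ^ 2 / n) by field_simp]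
              have : t ^ 2 / n ≤ M ^ 2 := by
                calc t ^ 2 / n ≤ t ^ 2 / 1 := by
                      apply div_le_div_of_nonneg_left (sq_nonneg t) one_pos ?_ |>.trans_eq rfl
                      exact_mod_cast hn1
                  _ = t ^ 2 := by ring
                  _ ≤ M ^ 2 := ht2
              nlinarith
    _ = Real.exp (K * M ^ 2) * (K * (t ^ 2 / n)) := by
        rw [hθdef, div_pow]; field_simp
    _ ≤ Real.exp (K * M ^ 2) * (K * M ^ 2) / n := by
        rw [show Real.exp (K * M ^ 2) * (K * M ^ 2) / n = Real.exp (K * M ^ 2) * (K * (M ^ 2 / n)) by ring]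
        gcongr

end superosc_helpers


/-- Fix `ħ > 0`, `d ≥ 1`, `p ∈ ℝ^d` and `a > 1`.  The sequence
`F_n(x) = ∑_{k=0}^{n} C_k(n,a) · exp(i·(p·x)·(1 − 2k/n)/ħ)` converges pointwise on `ℝ^d`
to `F(x) = exp(i·a·(p·x)/ħ)` as `n → ∞`, uniformly on every compact subset of `ℝ^d`. -/
theorem superoscillation_convergence
    (hbar : ℝ) (hhbar : 0 < hbar) (d : ℕ) (hd : 1 ≤ d)
    (p : EuclideanSpace ℝ (Fin d)) (a : ℝ) (ha : 1 < a)
    (F : ℕ → EuclideanSpace ℝ (Fin d) → ℂ)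
    (hF : ∀ (n : ℕ) (x : EuclideanSpace ℝ (Fin d)),
      F n x = ∑ k ∈ Finset.range (n + 1),
        ((n.choose k : ℂ) * (((1 + a) / 2 : ℝ) : ℂ) ^ (n - k)
            * (((1 - a) / 2 : ℝ) : ℂ) ^ k)
          * Complex.exp (Complex.I * ((⟪p, x⟫ : ℝ) : ℂ)
              * (1 - 2 * (k : ℂ) / (n : ℂ)) / (hbar : ℂ))) :
    (∀ x : EuclideanSpace ℝ (Fin d),
      Filter.Tendsto (fun n : ℕ => F n x) Filter.atTop
        (nhds (Complex.exp (Complex.I * (a : ℂ) * ((⟪p, x⟫ : ℝ) : ℂ) / (hbar : ℂ)))))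
    ∧ ∀ K : Set (EuclideanSpace ℝ (Fin d)), IsCompact K →
        TendstoUniformlyOn (fun n x => F n x)
          (fun x => Complex.exp (Complex.I * (a : ℂ) * ((⟪p, x⟫ : ℝ) : ℂ) / (hbar : ℂ)))
          Filter.atTop K := by
  have main : ∀ K : Set (EuclideanSpace ℝ (Fin d)), IsCompact K →
      TendstoUniformlyOn (fun n x => F n x)
        (fun x => Complex.exp (Complex.I * (a : ℂ) * ((⟪p, x⟫ : ℝ) : ℂ) / (hbar : ℂ)))
        Filter.atTop K := by
    intro K hK
    obtain ⟨r, hr⟩ := hK.isBounded.subset_closedBall 0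
    set M : ℝ := max 0 (‖p‖ * r / hbar) with hMdef
    have hM : 0 ≤ M := le_max_left _ _
    set C : ℝ := Real.exp ((a ^ 2 + 2 * a) * M ^ 2) * ((a ^ 2 + 2 * a) * M ^ 2) with hCdef
    have hC : 0 ≤ C := by
      apply mul_nonneg (Real.exp_pos _).le
      apply mul_nonneg (by nlinarith) (sq_nonneg M)
    rw [Metric.tendstoUniformlyOn_iff]
    intro ε hε
    filter_upwards [Filter.eventually_ge_atTop (max 1 (⌈a * M⌉₊ + ⌈C / ε⌉₊ + 1))] with n hn
    intro x hx
    have hn1 : 1 ≤ n := le_trans (le_max_left _ _) hn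
    have hn2' : ⌈a * M⌉₊ + ⌈C / ε⌉₊ + 1 ≤ n := le_trans (le_max_right _ _) hn
    have hnaM : a * M ≤ n := by
      calc a * M ≤ (⌈a * M⌉₊ : ℝ) := Nat.le_ceil _
        _ ≤ n := by exact_mod_cast Nat.le_of_lt (by omega)
    have hnC : C / (n : ℝ) < ε := by
      have h1 : C / ε < n := by
        calc C / ε ≤ (⌈C / ε⌉₊ : ℝ) := Nat.le_ceil _
          _ < n := by exact_mod_cast (by omega : ⌈C / ε⌉₊ < n)
      have hn0 : (0 : ℝ) < n := by exact_mod_cast hn1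
      rw [div_lt_iff₀ hn0]
      nlinarith [(div_lt_iff₀ hε).mp h1]
    set t : ℝ := ⟪p, x⟫ / hbar with htdef
    have ht : |t| ≤ M := by
      have hxr : ‖x‖ ≤ r := by
        have := hr hx
        rwa [Metric.mem_closedBall, dist_zero_right] at this
      calc |t| = |(⟪p, x⟫ : ℝ)| / hbar := by
            rw [htdef, abs_div, abs_of_pos hhbar]
        _ ≤ ‖p‖ * r / hbar := by
            gcongr
            calc |(⟪p, x⟫ : ℝ)| ≤ ‖p‖ * ‖x‖ := abs_real_inner_le_norm p x
              _ ≤ ‖p‖ * r := by gcongr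
        _ ≤ M := le_max_right _ _
    have hFeq : F n x = ((((1 - a) / 2 : ℝ) : ℂ) * Complex.exp (-(Complex.I * t / n))
        + (((1 + a) / 2 : ℝ) : ℂ) * Complex.exp (Complex.I * t / n)) ^ n := by
      rw [hF n x, ← sum_eq_pow a (Complex.I * (t : ℂ)) n hn1]
      apply Finset.sum_congr rfl
      intro k _
      congr 1
      congr 1
      rw [htdef]
      push_cast
      ring
    have hlim : Complex.exp (Complex.I * (a : ℂ) * ((⟪p, x⟫ : ℝ) : ℂ) / (hbar : ℂ))
        = Complex.exp (Complex.I * a * t) := by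
      congr 1
      rw [htdef]
      push_cast
      ring
    rw [dist_eq_norm, hlim, hFeq, norm_sub_rev]
    calc ‖_ - _‖ ≤ C / n := by
          exact key_bound a M ha hM n hn1 hnaM t ht
      _ < ε := hnC
  refine ⟨fun x => ?_, main⟩
  have h := main {x} isCompact_singleton
  exact h.tendsto_at (Set.mem_singleton x)
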